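/- arXiv:1910.12300 — 2 statements merged into one kernel-verified Lean document; each statement's English description precedes it below -/
import Mathlib

section
/- (Exponential sum over finitely supported sequences) Let $\eta > 0$. There exists $\tau = \tau(\eta) > 0$ such that for every $\rho \in (0,1)$, $\sum_{\ell \in \mathbb{Z}^\infty_*} e^{-\rho|\ell|_\eta} \le C\exp\left(\frac{\tau}{\rho^{1/\eta}}\ln\frac{\tau}{\rho}\right)$, where the sum runs over all finitely supported integer sequences $\ell$ and $|\ell|_\eta = \sum_i \langle i\rangle^\eta|\ell_i|$. In particular the sum is finite for every $\rho > 0$. -/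
open scoped BigOperators

/-- The weighted norm `|ℓ|_η = ∑_i ⟨i⟩^η |ℓ_i|` on finitely supported integer sequences. -/
noncomputable def wnorm (η : ℝ) (ℓ : ℕ →₀ ℤ) : ℝ :=
  ∑ i ∈ ℓ.support, ((i : ℝ) + 1) ^ η * |(ℓ i : ℝ)|

open Finset

lemma geom_tail {x : ℝ} (hx : 0 < x) (M : ℕ) :
    ∑ k ∈ range M, Real.exp (-(x * (k+1))) ≤ 1 / (Real.exp x - 1) := by
  have he : 1 < Real.exp x := Real.one_lt_exp_iff.mpr hx
  have hr0 : 0 < Real.exp (-x) := Real.exp_pos _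
  have hr1 : Real.exp (-x) < 1 := Real.exp_lt_one_iff.mpr (by linarith)
  have hterm : ∀ k : ℕ, Real.exp (-(x * (k+1))) = Real.exp (-x) * Real.exp (-x) ^ k := by
    intro k
    rw [← Real.exp_nat_mul, ← Real.exp_add]
    ring_nf
  simp only [hterm]
  rw [← Finset.mul_sum]
  have hg : ∑ k ∈ range M, Real.exp (-x) ^ k ≤ 1 / (1 - Real.exp (-x)) := by
    rw [geom_sum_eq (by linarith)]
    have heq : (Real.exp (-x) ^ M - 1) / (Real.exp (-x) - 1)
        = (1 - Real.exp (-x) ^ M) / (1 - Real.exp (-x)) := by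
      rw [← neg_div_neg_eq]; ring_nf
    rw [heq]
    rw [div_le_div_iff_of_pos_right (by linarith)]
    nlinarith [pow_nonneg hr0.le M]
  have key : Real.exp (-x) * (1 / (1 - Real.exp (-x))) = 1 / (Real.exp x - 1) := by
    have hex : Real.exp x ≠ 0 := (Real.exp_pos x).ne'
    rw [Real.exp_neg]
    field_simp
  calc Real.exp (-x) * ∑ k ∈ range M, Real.exp (-x) ^ k
      ≤ Real.exp (-x) * (1 / (1 - Real.exp (-x))) := by
        exact mul_le_mul_of_nonneg_left hg hr0.le
    _ = 1 / (Real.exp x - 1) := key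

lemma icc_sum (x : ℝ) (M : ℕ) :
    ∑ h ∈ Finset.Icc (-(M:ℤ)) M, Real.exp (-(x * |(h:ℝ)|))
      = 1 + 2 * ∑ k ∈ range M, Real.exp (-(x * (k+1))) := by
  induction M with
  | zero => simp
  | succ M ih =>
      have h1 : Finset.Icc (-((M:ℤ)+1)) ((M:ℤ)+1)
          = insert (-((M:ℤ)+1)) (insert ((M:ℤ)+1) (Finset.Icc (-(M:ℤ)) M)) := by
        ext h
        simp only [Finset.mem_Icc, Finset.mem_insert]
        omega
      have h2 : (-((M:ℤ)+1)) ∉ insert ((M:ℤ)+1) (Finset.Icc (-(M:ℤ)) M) := by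
        simp only [Finset.mem_Icc, Finset.mem_insert]; omega
      have h3 : ((M:ℤ)+1) ∉ Finset.Icc (-(M:ℤ)) M := by
        simp only [Finset.mem_Icc]; omega
      have hM : ((M:ℕ):ℤ) + 1 = (((M+1:ℕ)):ℤ) := by push_cast; ring
      rw [← hM] at *
      rw [h1, Finset.sum_insert h2, Finset.sum_insert h3, ih, Finset.sum_range_succ]
      have e1 : ((-((M:ℤ)+1) : ℤ) : ℝ) = -((M:ℝ)+1) := by push_cast; ring
      have e2 : ((((M:ℤ)+1) : ℤ) : ℝ) = ((M:ℝ)+1) := by push_cast; ring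
      rw [e1, e2, abs_neg, abs_of_nonneg (by positivity : (0:ℝ) ≤ (M:ℝ)+1)]
      push_cast
      ring

lemma site_sum_le {x : ℝ} (hx : 0 < x) (F : Finset ℤ) :
    ∑ h ∈ F, Real.exp (-(x * |(h:ℝ)|)) ≤ 1 + 2 / (Real.exp x - 1) := by
  have he : 1 < Real.exp x := Real.one_lt_exp_iff.mpr hx
  set M := F.sup Int.natAbs with hMdef
  have hsub : F ⊆ Finset.Icc (-(M:ℤ)) M := by
    intro h hh
    have : h.natAbs ≤ M := Finset.le_sup hh
    simp only [Finset.mem_Icc]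
    omega
  calc ∑ h ∈ F, Real.exp (-(x * |(h:ℝ)|))
      ≤ ∑ h ∈ Finset.Icc (-(M:ℤ)) M, Real.exp (-(x * |(h:ℝ)|)) :=
        Finset.sum_le_sum_of_subset_of_nonneg hsub (fun _ _ _ => (Real.exp_pos _).le)
    _ = 1 + 2 * ∑ k ∈ range M, Real.exp (-(x * (k+1))) := icc_sum x M
    _ ≤ 1 + 2 * (1 / (Real.exp x - 1)) := by
        have := geom_tail hx M
        linarith
    _ = 1 + 2 / (Real.exp x - 1) := by ring

lemma sum_finsupp_le (η ρ : ℝ) (hη : 0 < η) (hρ : 0 < ρ) (s : Finset (ℕ →₀ ℤ)) :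
    ∃ m : ℕ, ∑ ℓ ∈ s, Real.exp (-(ρ * wnorm η ℓ)) ≤
      ∏ i ∈ range m, (1 + 2 / (Real.exp (ρ * ((i:ℝ)+1)^η) - 1)) := by
  classical
  set w : ℕ → ℝ := fun i => ((i:ℝ)+1)^η with hw
  have hwpos : ∀ i : ℕ, 0 < w i := fun i => Real.rpow_pos_of_pos (by positivity) _
  set g : ℕ → ℤ → ℝ := fun i h => Real.exp (-(ρ * w i * |(h:ℝ)|)) with hg
  set S : ℕ → ℝ := fun i => 1 + 2 / (Real.exp (ρ * w i) - 1) with hS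
  have hS1 : ∀ i : ℕ, 1 ≤ S i := by
    intro i
    have hx : 0 < ρ * w i := mul_pos hρ (hwpos i)
    have h1 : 1 < Real.exp (ρ * w i) := Real.one_lt_exp_iff.mpr hx
    have : 0 ≤ 2 / (Real.exp (ρ * w i) - 1) := div_nonneg (by norm_num) (by linarith)
    simp only [hS]; linarith
  set T : Finset ℕ := s.sup Finsupp.support with hT
  set M : ℕ := s.sup (fun ℓ => ℓ.support.sup fun i => (ℓ i).natAbs) with hM
  set A : Finset ℤ := Finset.Icc (-(M:ℤ)) (M:ℤ) with hA
  have hsupp : ∀ ℓ ∈ s, ℓ.support ⊆ T := fun ℓ hℓ => Finset.le_sup hℓ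
  have hval : ∀ ℓ ∈ s, ∀ i : ℕ, ℓ i ∈ A := by
    intro ℓ hℓ i
    simp only [hA, Finset.mem_Icc]
    by_cases h0 : ℓ i = 0
    · simp [h0]
    · have hi : i ∈ ℓ.support := Finsupp.mem_support_iff.mpr h0
      have h1 : (ℓ i).natAbs ≤ ℓ.support.sup fun j => (ℓ j).natAbs := Finset.le_sup (f := fun j => (ℓ j).natAbs) hi
      have h2 : (ℓ.support.sup fun j => (ℓ j).natAbs) ≤ M :=
        Finset.le_sup (f := fun ℓ : ℕ →₀ ℤ => ℓ.support.sup fun j => (ℓ j).natAbs) hℓ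
      omega
  -- rewrite each term as a product over T
  have step1 : ∀ ℓ ∈ s, Real.exp (-(ρ * wnorm η ℓ)) = ∏ i ∈ T, g i (ℓ i) := by
    intro ℓ hℓ
    have hwn : wnorm η ℓ = ∑ i ∈ T, w i * |(ℓ i : ℝ)| := by
      refine Finset.sum_subset (hsupp ℓ hℓ) ?_
      intro i _ hi
      simp [Finsupp.notMem_support_iff.mp hi]
    rw [hwn, Finset.mul_sum, ← Finset.sum_neg_distrib, Real.exp_sum]
    exact Finset.prod_congr rfl fun i _ => by rw [← mul_assoc]
  rw [Finset.sum_congr rfl step1]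
  -- embed into the pi set
  set e : (ℕ →₀ ℤ) → (∀ i ∈ T, ℤ) := fun ℓ i _ => ℓ i with he
  have hinj : ∀ ℓ₁ ∈ s, ∀ ℓ₂ ∈ s, e ℓ₁ = e ℓ₂ → ℓ₁ = ℓ₂ := by
    intro ℓ₁ h₁ ℓ₂ h₂ h
    ext i
    by_cases hi : i ∈ T
    · exact congrFun (congrFun h i) hi
    · have n1 : i ∉ ℓ₁.support := fun hmem => hi (hsupp ℓ₁ h₁ hmem)
      have n2 : i ∉ ℓ₂.support := fun hmem => hi (hsupp ℓ₂ h₂ hmem)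
      rw [Finsupp.notMem_support_iff.mp n1, Finsupp.notMem_support_iff.mp n2]
  have himg : s.image e ⊆ T.pi (fun _ => A) := by
    intro p hp
    rcases Finset.mem_image.mp hp with ⟨ℓ, hℓ, rfl⟩
    exact Finset.mem_pi.mpr fun i hi => hval ℓ hℓ i
  have step2 : ∑ ℓ ∈ s, ∏ i ∈ T, g i (ℓ i)
      ≤ ∑ p ∈ T.pi (fun _ => A), ∏ x ∈ T.attach, g x.1 (p x.1 x.2) := by
    have : ∑ ℓ ∈ s, ∏ i ∈ T, g i (ℓ i)
        = ∑ p ∈ s.image e, ∏ x ∈ T.attach, g x.1 (p x.1 x.2) := by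
      rw [Finset.sum_image hinj]
      refine Finset.sum_congr rfl fun ℓ _ => ?_
      rw [← Finset.prod_attach T (fun i => g i (ℓ i))]
    rw [this]
    refine Finset.sum_le_sum_of_subset_of_nonneg himg fun p _ _ => ?_
    exact Finset.prod_nonneg fun x _ => (Real.exp_pos _).le
  have step3 : ∑ p ∈ T.pi (fun _ => A), ∏ x ∈ T.attach, g x.1 (p x.1 x.2)
      = ∏ i ∈ T, ∑ h ∈ A, g i h := (Finset.prod_sum T _ _).symm
  have step4 : ∏ i ∈ T, ∑ h ∈ A, g i h ≤ ∏ i ∈ T, S i := by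
    refine Finset.prod_le_prod (fun i _ => Finset.sum_nonneg fun h _ => (Real.exp_pos _).le)
      (fun i _ => ?_)
    have := site_sum_le (mul_pos hρ (hwpos i)) A
    simpa [hg, hS] using this
  refine ⟨(T.sup id) + 1, ?_⟩
  have hTsub : T ⊆ range (T.sup id + 1) := by
    intro i hi
    simp only [Finset.mem_range]
    exact Nat.lt_succ_of_le (Finset.le_sup (f := id) hi)
  have step5 : ∏ i ∈ T, S i ≤ ∏ i ∈ range (T.sup id + 1), S i := by
    rw [← Finset.prod_sdiff hTsub]
    have hone : (1:ℝ) ≤ ∏ i ∈ range (T.sup id + 1) \ T, S i := by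
      have := Finset.prod_le_prod (s := range (T.sup id + 1) \ T)
        (f := fun _ : ℕ => (1:ℝ)) (g := S) (fun _ _ => zero_le_one) (fun i _ => hS1 i)
      simpa using this
    have hTnn : (0:ℝ) ≤ ∏ i ∈ T, S i :=
      Finset.prod_nonneg fun i _ => le_trans zero_le_one (hS1 i)
    exact le_mul_of_one_le_left hTnn hone
  calc ∑ ℓ ∈ s, ∏ i ∈ T, g i (ℓ i)
      ≤ ∑ p ∈ T.pi (fun _ => A), ∏ x ∈ T.attach, g x.1 (p x.1 x.2) := step2
    _ = ∏ i ∈ T, ∑ h ∈ A, g i h := step3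
    _ ≤ ∏ i ∈ T, S i := step4
    _ ≤ ∏ i ∈ range (T.sup id + 1), S i := step5

lemma inv_sq_tail (N m : ℕ) (hN : 1 ≤ N) :
    ∑ i ∈ Ico N m, (((i:ℝ)+1)^2)⁻¹ ≤ (N:ℝ)⁻¹ := by
  have key : ∀ m', N ≤ m' → ∑ i ∈ Ico N m', (((i:ℝ)+1)^2)⁻¹ ≤ (N:ℝ)⁻¹ - (m':ℝ)⁻¹ := by
    intro m' hm'
    induction m', hm' using Nat.le_induction with
    | base => simp
    | succ n hn ih =>
      rw [Finset.sum_Ico_succ_top hn]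
      have hn1 : 1 ≤ n := le_trans hN hn
      have hn0 : (0:ℝ) < (n:ℝ) := by exact_mod_cast hn1
      have h1 : (((n:ℝ)+1)^2)⁻¹ ≤ (n:ℝ)⁻¹ - ((n:ℝ)+1)⁻¹ := by
        have heq : (n:ℝ)⁻¹ - ((n:ℝ)+1)⁻¹ = ((n:ℝ)*((n:ℝ)+1))⁻¹ := by
          field_simp
          ring
        rw [heq]
        apply inv_anti₀ (by positivity)
        nlinarith
      push_cast
      linarith
  rcases le_or_gt m N with h | h
  · rw [Finset.Ico_eq_empty (by omega)]
    simp
  · have h2 : (0:ℝ) ≤ (m:ℝ)⁻¹ := by positivity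
    linarith [key m h.le]

set_option maxHeartbeats 1000000 in
lemma prod_S_le (η : ℝ) (hη : 0 < η) :
    ∃ τ > (0:ℝ), ∀ ρ : ℝ, 0 < ρ → ρ < 1 → ∀ m : ℕ,
      ∏ i ∈ range m, (1 + 2 / (Real.exp (ρ * ((i:ℝ)+1)^η) - 1))
        ≤ Real.exp (τ / ρ ^ (1/η : ℝ) * Real.log (τ / ρ)) := by
  classical
  set k : ℕ := ⌈2/η⌉₊ + 1 with hk
  have hkη : 2 ≤ (k:ℝ) * η := by
    have h1 : 2/η ≤ (⌈2/η⌉₊ : ℝ) := Nat.le_ceil _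
    have h2 : (⌈2/η⌉₊ : ℝ) ≤ (k:ℝ) := by push_cast [hk]; linarith
    have := (div_le_iff₀ hη).mp (h1.trans h2)
    linarith
  have hfact1 : (1:ℝ) ≤ (k.factorial : ℝ) := by exact_mod_cast Nat.one_le_iff_ne_zero.mpr k.factorial_ne_zero
  set c : ℝ := (2:ℝ)^η + 2 with hc
  have h2η : (0:ℝ) < (2:ℝ)^η := Real.rpow_pos_of_pos (by norm_num) _
  set τ : ℝ := (2:ℝ)^η + 4*(k.factorial : ℝ) + 5 with hτ
  have hτ9 : (9:ℝ) ≤ τ := by simp only [hτ]; linarith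
  have hτpos : 0 < τ := by linarith
  have hcτ : c ≤ τ := by simp only [hc, hτ]; linarith
  have hc2 : (2:ℝ) ≤ c := by simp only [hc]; linarith
  refine ⟨τ, hτpos, ?_⟩
  intro ρ hρ hρ1 m
  set w : ℕ → ℝ := fun i => ((i:ℝ)+1)^η with hw
  have hwpos : ∀ i : ℕ, 0 < w i := fun i => Real.rpow_pos_of_pos (by positivity) _
  set S : ℕ → ℝ := fun i => 1 + 2 / (Real.exp (ρ * w i) - 1) with hS
  have hxpos : ∀ i : ℕ, 0 < ρ * w i := fun i => mul_pos hρ (hwpos i)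
  have hS1 : ∀ i : ℕ, 1 ≤ S i := by
    intro i
    have h1 : 1 < Real.exp (ρ * w i) := Real.one_lt_exp_iff.mpr (hxpos i)
    have h2 : 0 ≤ 2 / (Real.exp (ρ * w i) - 1) := div_nonneg (by norm_num) (by linarith)
    simp only [hS]; linarith
  -- basic rpow quantities
  set P : ℝ := ρ ^ (1/η : ℝ) with hP
  have hP0 : 0 < P := Real.rpow_pos_of_pos hρ _
  have hP1 : P < 1 := Real.rpow_lt_one hρ.le hρ1 (by positivity)
  set Q : ℝ := P⁻¹ with hQ
  have hQ0 : 0 < Q := by positivity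
  have hQ1 : 1 < Q := (one_lt_inv₀ hP0).mpr hP1
  have hPη : P ^ η = ρ := by
    rw [hP, ← Real.rpow_mul hρ.le, one_div, inv_mul_cancel₀ hη.ne', Real.rpow_one]
  have hQη : Q ^ η = ρ⁻¹ := by
    rw [hQ, Real.inv_rpow hP0.le, hPη]
  set N : ℕ := ⌈Q⌉₊ with hN
  have hN1 : 1 ≤ N := Nat.one_le_iff_ne_zero.mpr (by
    have : 0 < N := Nat.ceil_pos.mpr hQ0
    omega)
  have hNQ : Q ≤ (N:ℝ) := Nat.le_ceil Q
  have hN0 : (0:ℝ) < (N:ℝ) := lt_of_lt_of_le hQ0 hNQ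
  have hN2Q : (N:ℝ) ≤ 2*Q := by
    have h1 : (N:ℝ) < Q + 1 := Nat.ceil_lt_add_one hQ0.le
    linarith
  -- Bound on the head factors
  have headfac : ∀ i : ℕ, i < N → S i ≤ c / ρ := by
    intro i hi
    have hx := hxpos i
    have hxlow : ρ ≤ ρ * w i := by
      have h1 : (1:ℝ) ≤ w i := Real.one_le_rpow (by push_cast; linarith) hη.le
      nlinarith
    have hxup : ρ * w i ≤ (2:ℝ)^η := by
      have h1 : ((i:ℝ)+1) ≤ (N:ℝ) := by
        have : (i:ℝ) + 1 ≤ (N:ℝ) := by exact_mod_cast Nat.succ_le_of_lt hi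
        linarith
      have h2 : w i ≤ ((2:ℝ)*Q)^η := by
        apply Real.rpow_le_rpow (by positivity) (by linarith) hη.le
      have h3 : ((2:ℝ)*Q)^η = (2:ℝ)^η * ρ⁻¹ := by
        rw [Real.mul_rpow (by norm_num) hQ0.le, hQη]
      have h4 : ρ * w i ≤ ρ * ((2:ℝ)^η * ρ⁻¹) := by nlinarith [h2.trans_eq h3]
      rw [mul_comm ((2:ℝ)^η) ρ⁻¹, ← mul_assoc, mul_inv_cancel₀ hρ.ne', one_mul] at h4
      exact h4
    have hexp : ρ * w i ≤ Real.exp (ρ * w i) - 1 := by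
      have := Real.add_one_le_exp (ρ * w i)
      linarith
    have hd1 : 2 / (Real.exp (ρ * w i) - 1) ≤ 2 / (ρ * w i) :=
      div_le_div_of_nonneg_left (by norm_num) hx hexp
    have hd2 : 1 + 2 / (ρ * w i) ≤ c / ρ := by
      rw [show (1:ℝ) + 2 / (ρ * w i) = (ρ * w i + 2) / (ρ * w i) by
        rw [add_div, div_self hx.ne']]
      have e1 : (ρ * w i + 2) / (ρ * w i) ≤ c / (ρ * w i) :=
        div_le_div_of_nonneg_right (by simp only [hc]; linarith) hx.le
      have e2 : c / (ρ * w i) ≤ c / ρ := by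
        apply div_le_div_of_nonneg_left (by linarith) hρ hxlow
      linarith
    simp only [hS]
    linarith
  -- Bound on the tail factors
  set D : ℝ := 4*(k.factorial:ℝ)/(ρ^k * (N:ℝ)^((k:ℝ)*η-2)) with hD
  have hAux : (0:ℝ) < ρ^k * (N:ℝ)^((k:ℝ)*η-2) := by
    have := Real.rpow_pos_of_pos hN0 ((k:ℝ)*η-2)
    positivity
  have hD0 : 0 ≤ D := by
    rw [hD]; positivity
  have tailfac : ∀ i : ℕ, N ≤ i → S i ≤ Real.exp (4 * Real.exp (-(ρ * w i))) ∧
      4 * Real.exp (-(ρ * w i)) ≤ D * (((i:ℝ)+1)^2)⁻¹ := by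
    intro i hi
    have hx := hxpos i
    have hNi : (N:ℝ) ≤ (i:ℝ) + 1 := by
      have : (N:ℝ) ≤ (i:ℝ) := by exact_mod_cast hi
      linarith
    have hx1 : 1 ≤ ρ * w i := by
      have h1 : Q ≤ ((i:ℝ)+1) := le_trans hNQ hNi
      have h2 : Q^η ≤ w i := Real.rpow_le_rpow hQ0.le h1 hη.le
      rw [hQη] at h2
      have h3 : ρ * ρ⁻¹ ≤ ρ * w i := by nlinarith
      rw [mul_inv_cancel₀ hρ.ne'] at h3
      exact h3
    have hE2 : (2:ℝ) ≤ Real.exp (ρ * w i) := by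
      have h1 : Real.exp 1 ≤ Real.exp (ρ * w i) := Real.exp_le_exp.mpr hx1
      have h2 : (2:ℝ) < Real.exp 1 := by
        have := Real.add_one_lt_exp (by norm_num : (1:ℝ) ≠ 0)
        linarith
      linarith
    constructor
    · have hd : 2 / (Real.exp (ρ * w i) - 1) ≤ 4 * Real.exp (-(ρ * w i)) := by
        have h4 : 4 * Real.exp (-(ρ * w i)) = 4 / Real.exp (ρ * w i) := by
          rw [Real.exp_neg]; ring
        rw [h4, div_le_div_iff₀ (by linarith) (by positivity)]
        nlinarith
      have hfin : 1 + 4 * Real.exp (-(ρ * w i)) ≤ Real.exp (4 * Real.exp (-(ρ * w i))) := by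
        have := Real.add_one_le_exp (4 * Real.exp (-(ρ * w i)))
        linarith
      have hSle : S i ≤ 1 + 4 * Real.exp (-(ρ * w i)) := by
        simp only [hS]; linarith
      linarith
    · have hpow : (ρ * w i)^k / (k.factorial:ℝ) ≤ Real.exp (ρ * w i) :=
        Real.pow_div_factorial_le_exp (ρ * w i) hx.le k
      have hxk : (0:ℝ) < (ρ * w i)^k := by positivity
      have hexpneg : Real.exp (-(ρ * w i)) ≤ (k.factorial:ℝ) / (ρ * w i)^k := by
        rw [Real.exp_neg]
        have h1 : (Real.exp (ρ * w i))⁻¹ ≤ ((ρ * w i)^k / (k.factorial:ℝ))⁻¹ :=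
          inv_anti₀ (by positivity) hpow
        rwa [inv_div] at h1
      -- lower bound on x^k
      have hwk : w i ^ k = ((i:ℝ)+1) ^ ((k:ℝ)*η) := by
        rw [show w i = ((i:ℝ)+1)^η from rfl,
          ← Real.rpow_natCast (((i:ℝ)+1)^η) k, ← Real.rpow_mul (by positivity), mul_comm η (k:ℝ)]
      have hsplit : ((i:ℝ)+1) ^ ((k:ℝ)*η) = ((i:ℝ)+1) ^ ((k:ℝ)*η - 2) * ((i:ℝ)+1)^(2:ℕ) := by
        rw [← Real.rpow_natCast ((i:ℝ)+1) 2, ← Real.rpow_add (by positivity)]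
        norm_num
      have hbase : (N:ℝ) ^ ((k:ℝ)*η - 2) ≤ ((i:ℝ)+1) ^ ((k:ℝ)*η - 2) :=
        Real.rpow_le_rpow hN0.le hNi (by linarith)
      have hxklow : ρ^k * ((N:ℝ)^((k:ℝ)*η-2) * ((i:ℝ)+1)^(2:ℕ)) ≤ (ρ * w i)^k := by
        rw [mul_pow, hwk, hsplit]
        have hρk : (0:ℝ) < ρ^k := by positivity
        have hsq : (0:ℝ) ≤ ((i:ℝ)+1)^(2:ℕ) := by positivity
        have hmid : (N:ℝ)^((k:ℝ)*η-2) * ((i:ℝ)+1)^(2:ℕ)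
            ≤ ((i:ℝ)+1)^((k:ℝ)*η-2) * ((i:ℝ)+1)^(2:ℕ) :=
          mul_le_mul_of_nonneg_right hbase hsq
        exact mul_le_mul_of_nonneg_left hmid hρk.le
      have hfinal : (k.factorial:ℝ) / (ρ * w i)^k
          ≤ (k.factorial:ℝ) / (ρ^k * ((N:ℝ)^((k:ℝ)*η-2) * ((i:ℝ)+1)^(2:ℕ))) := by
        apply div_le_div_of_nonneg_left (by positivity) _ hxklow
        have := Real.rpow_pos_of_pos hN0 ((k:ℝ)*η-2)
        positivity
      have hrearr : 4 * ((k.factorial:ℝ) / (ρ^k * ((N:ℝ)^((k:ℝ)*η-2) * ((i:ℝ)+1)^(2:ℕ))))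
          = D * (((i:ℝ)+1)^2)⁻¹ := by
        rw [hD]
        field_simp
      calc 4 * Real.exp (-(ρ * w i)) ≤ 4 * ((k.factorial:ℝ) / (ρ * w i)^k) := by linarith
        _ ≤ 4 * ((k.factorial:ℝ) / (ρ^k * ((N:ℝ)^((k:ℝ)*η-2) * ((i:ℝ)+1)^(2:ℕ)))) := by linarith
        _ = D * (((i:ℝ)+1)^2)⁻¹ := hrearr
  -- head product bound
  have headprod : ∏ i ∈ range N, S i ≤ Real.exp ((N:ℝ) * Real.log (c/ρ)) := by
    have h1 : ∏ i ∈ range N, S i ≤ ∏ _i ∈ range N, (c/ρ) :=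
      Finset.prod_le_prod (fun i _ => le_trans zero_le_one (hS1 i))
        (fun i hi => headfac i (Finset.mem_range.mp hi))
    rw [Finset.prod_const, Finset.card_range] at h1
    have h2 : (c/ρ)^N = Real.exp ((N:ℝ) * Real.log (c/ρ)) := by
      rw [← Real.exp_log (show (0:ℝ) < c/ρ by positivity), ← Real.exp_nat_mul, Real.exp_log
        (show (0:ℝ) < c/ρ by positivity)]
    rw [← h2]
    exact h1
  -- tail product bound
  have tailprod : ∀ m' : ℕ, ∏ i ∈ Ico N m', S i ≤ Real.exp (4*(k.factorial:ℝ) * Q) := by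
    intro m'
    have h1 : ∏ i ∈ Ico N m', S i ≤ ∏ i ∈ Ico N m', Real.exp (4 * Real.exp (-(ρ * w i))) :=
      Finset.prod_le_prod (fun i _ => le_trans zero_le_one (hS1 i))
        (fun i hi => (tailfac i (Finset.mem_Ico.mp hi).1).1)
    rw [← Real.exp_sum] at h1
    have h2 : ∑ i ∈ Ico N m', 4 * Real.exp (-(ρ * w i)) ≤ D * (N:ℝ)⁻¹ := by
      calc ∑ i ∈ Ico N m', 4 * Real.exp (-(ρ * w i))
          ≤ ∑ i ∈ Ico N m', D * (((i:ℝ)+1)^2)⁻¹ :=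
            Finset.sum_le_sum (fun i hi => (tailfac i (Finset.mem_Ico.mp hi).1).2)
        _ = D * ∑ i ∈ Ico N m', (((i:ℝ)+1)^2)⁻¹ := by rw [Finset.mul_sum]
        _ ≤ D * (N:ℝ)⁻¹ := mul_le_mul_of_nonneg_left (inv_sq_tail N m' hN1) hD0
    have h3 : D * (N:ℝ)⁻¹ ≤ 4*(k.factorial:ℝ) * Q := by
      have hNe : D * (N:ℝ)⁻¹ = 4*(k.factorial:ℝ) / (ρ^k * ((N:ℝ)^((k:ℝ)*η-2) * (N:ℝ))) := by
        rw [hD]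
        field_simp
      have hNpow : (N:ℝ)^((k:ℝ)*η-2) * (N:ℝ) = (N:ℝ)^((k:ℝ)*η-1) := by
        nth_rewrite 2 [← Real.rpow_one (N:ℝ)]
        rw [← Real.rpow_add hN0]
        congr 1
        ring
      have hQpow : Q^((k:ℝ)*η-1) = (ρ^k)⁻¹ / Q := by
        rw [Real.rpow_sub hQ0, Real.rpow_one, mul_comm (k:ℝ) η, Real.rpow_mul hQ0.le,
          hQη, Real.rpow_natCast, inv_pow]
      have hlow : Q⁻¹ ≤ ρ^k * (N:ℝ)^((k:ℝ)*η-1) := by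
        have h5 : Q^((k:ℝ)*η-1) ≤ (N:ℝ)^((k:ℝ)*η-1) :=
          Real.rpow_le_rpow hQ0.le hNQ (by linarith)
        rw [hQpow] at h5
        have hρk : (0:ℝ) < ρ^k := by positivity
        have h6 : ρ^k * ((ρ^k)⁻¹ / Q) ≤ ρ^k * (N:ℝ)^((k:ℝ)*η-1) :=
          mul_le_mul_of_nonneg_left h5 hρk.le
        calc Q⁻¹ = ρ^k * ((ρ^k)⁻¹ / Q) := by field_simp
          _ ≤ _ := h6
      rw [hNe, hNpow]
      calc 4*(k.factorial:ℝ) / (ρ^k * (N:ℝ)^((k:ℝ)*η-1))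
          ≤ 4*(k.factorial:ℝ) / Q⁻¹ :=
            div_le_div_of_nonneg_left (by positivity) (by positivity) hlow
        _ = 4*(k.factorial:ℝ) * Q := by rw [div_eq_mul_inv, inv_inv]
    calc ∏ i ∈ Ico N m', S i ≤ Real.exp (∑ i ∈ Ico N m', 4 * Real.exp (-(ρ * w i))) := h1
      _ ≤ Real.exp (4*(k.factorial:ℝ) * Q) := Real.exp_le_exp.mpr (le_trans h2 h3)
  -- combine
  set m' : ℕ := max m N with hm'
  have hrange : ∏ i ∈ range m, S i ≤ ∏ i ∈ range m', S i := by
    rw [← Finset.prod_sdiff (Finset.range_subset_range.mpr (le_max_left m N))]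
    have hone : (1:ℝ) ≤ ∏ i ∈ range m' \ range m, S i := by
      have := Finset.prod_le_prod (s := range m' \ range m)
        (f := fun _ : ℕ => (1:ℝ)) (g := S) (fun _ _ => zero_le_one) (fun i _ => hS1 i)
      simpa using this
    have hnn : (0:ℝ) ≤ ∏ i ∈ range m, S i :=
      Finset.prod_nonneg fun i _ => le_trans zero_le_one (hS1 i)
    exact le_mul_of_one_le_left hnn hone
  have hsplitr : ∏ i ∈ range m', S i = (∏ i ∈ range N, S i) * ∏ i ∈ Ico N m', S i := by
    rw [Finset.range_eq_Ico, ← Finset.prod_Ico_consecutive S (Nat.zero_le N) (le_max_right m N),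
      ← Finset.range_eq_Ico]
  have hcomb : ∏ i ∈ range m, S i
      ≤ Real.exp ((N:ℝ) * Real.log (c/ρ) + 4*(k.factorial:ℝ) * Q) := by
    rw [Real.exp_add]
    calc ∏ i ∈ range m, S i ≤ ∏ i ∈ range m', S i := hrange
      _ = (∏ i ∈ range N, S i) * ∏ i ∈ Ico N m', S i := hsplitr
      _ ≤ Real.exp ((N:ℝ) * Real.log (c/ρ)) * Real.exp (4*(k.factorial:ℝ) * Q) := by
          apply mul_le_mul headprod (tailprod m')
            (Finset.prod_nonneg fun i _ => le_trans zero_le_one (hS1 i)) (Real.exp_pos _).le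
  -- final comparison of exponents
  set L : ℝ := Real.log (τ/ρ) with hL
  have hτρ : τ ≤ τ/ρ := by
    rw [le_div_iff₀ hρ]
    nlinarith
  have hL1 : 1 ≤ L := by
    rw [hL, Real.le_log_iff_exp_le (by positivity)]
    have h1 : Real.exp 1 < 2.7182818286 := Real.exp_one_lt_d9
    linarith
  have hLc : Real.log (c/ρ) ≤ L := by
    rw [hL]
    apply Real.log_le_log (by positivity)
    exact div_le_div_of_nonneg_right hcτ hρ.le
  have hLc0 : 0 ≤ Real.log (c/ρ) := by
    apply Real.log_nonneg
    rw [le_div_iff₀ hρ]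
    nlinarith
  have hexps : (N:ℝ) * Real.log (c/ρ) + 4*(k.factorial:ℝ) * Q ≤ τ / P * L := by
    have e1 : (N:ℝ) * Real.log (c/ρ) ≤ (2*Q) * L :=
      mul_le_mul hN2Q hLc hLc0 (by positivity)
    have e2 : 4*(k.factorial:ℝ) * Q ≤ (4*(k.factorial:ℝ) * Q) * L :=
      le_mul_of_one_le_right (by positivity) hL1
    have e3 : τ / P = τ * Q := by rw [hQ, div_eq_mul_inv]
    have e4 : (2*Q) * L + (4*(k.factorial:ℝ) * Q) * L ≤ (τ * Q) * L := by
      have h5 : (2 + 4*(k.factorial:ℝ)) ≤ τ := by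
        rw [hτ]; linarith
      have h6 : (0:ℝ) ≤ Q * L := by positivity
      nlinarith
    rw [e3]
    nlinarith [e1, e2, e4]
  calc ∏ i ∈ range m, S i ≤ Real.exp ((N:ℝ) * Real.log (c/ρ) + 4*(k.factorial:ℝ) * Q) := hcomb
    _ ≤ Real.exp (τ / P * L) := Real.exp_le_exp.mpr hexps

/-- Exponential sum over finitely supported sequences. -/
theorem stmt15 (η : ℝ) (hη : 0 < η) :
    ∃ τ > (0 : ℝ), ∃ C > (0 : ℝ), ∀ ρ : ℝ, 0 < ρ → ρ < 1 →
      Summable (fun ℓ : ℕ →₀ ℤ => Real.exp (-(ρ * wnorm η ℓ))) ∧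
      ∑' ℓ : ℕ →₀ ℤ, Real.exp (-(ρ * wnorm η ℓ)) ≤
        C * Real.exp (τ / ρ ^ (1 / η) * Real.log (τ / ρ)) := by
  obtain ⟨τ, hτpos, hbound⟩ := prod_S_le η hη
  refine ⟨τ, hτpos, 1, one_pos, ?_⟩
  intro ρ hρ hρ1
  have key : ∀ u : Finset (ℕ →₀ ℤ), ∑ ℓ ∈ u, Real.exp (-(ρ * wnorm η ℓ))
      ≤ Real.exp (τ / ρ ^ (1/η : ℝ) * Real.log (τ/ρ)) := by
    intro u
    obtain ⟨m, hm⟩ := sum_finsupp_le η ρ hη hρ u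
    exact hm.trans (hbound ρ hρ hρ1 m)
  have hsum : Summable (fun ℓ : ℕ →₀ ℤ => Real.exp (-(ρ * wnorm η ℓ))) :=
    summable_of_sum_le (fun ℓ => (Real.exp_pos _).le) key
  refine ⟨hsum, ?_⟩
  rw [one_mul]
  exact Summable.tsum_le_of_sum_le hsum key
end

section
/- (Truncated small-divisor product bound) Let $\eta > 0$ and $\mu_1, \mu_2 \ge 1$. There exists $C = C(\eta,\mu_1,\mu_2) > 0$ such that for all sufficiently large $N$, $\sup\left\{\prod_{i\in\mathbb{N}}(1+\langle i\rangle^{\mu_1}|\ell_i|^{\mu_2}) : \ell \in \mathbb{Z}^\infty_*,\ |\ell|_\eta < N\right\} \le (1+N)^{C N^{1/(1+\eta)}}$. -/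
open scoped BigOperators

lemma strictMono_fin_le {k : ℕ} (f : Fin k → ℕ) (hf : StrictMono f) :
    ∀ i : Fin k, (i : ℕ) ≤ f i := by
  rintro ⟨v, hv⟩
  induction v with
  | zero => exact Nat.zero_le _
  | succ n ih =>
    have h1 : f ⟨n, Nat.lt_of_succ_lt hv⟩ < f ⟨n + 1, hv⟩ := hf (by simp [Fin.lt_def])
    have h2 := ih (Nat.lt_of_succ_lt hv)
    simp only at h2 ⊢
    omega

/-- Sum over a finset of naturals dominates the sum over an initial segment, for a
monotone nonnegative function. -/
lemma sum_range_card_le {s : Finset ℕ} {g : ℕ → ℝ} (hg : Monotone g) :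
    ∑ j ∈ Finset.range s.card, g j ≤ ∑ i ∈ s, g i := by
  set k := s.card with hk
  have himg : Finset.image (fun j => s.orderEmbOfFin hk.symm j) Finset.univ = s := by
    apply Finset.eq_of_subset_of_card_le
    · intro x hx
      simp only [Finset.mem_image] at hx
      obtain ⟨j, _, rfl⟩ := hx
      exact Finset.orderEmbOfFin_mem s hk.symm j
    · rw [Finset.card_image_of_injective _ (s.orderEmbOfFin hk.symm).injective,
        Finset.card_univ, Fintype.card_fin]
  rw [← himg, Finset.sum_image (fun a _ b _ h => (s.orderEmbOfFin hk.symm).injective h),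
    ← Fin.sum_univ_eq_sum_range]
  apply Finset.sum_le_sum
  intro j _
  exact hg (strictMono_fin_le _ (s.orderEmbOfFin hk.symm).strictMono j)

/-- Truncated small-divisor product bound. -/
theorem stmt16 (η μ₁ μ₂ : ℝ) (hη : 0 < η) (hμ₁ : 1 ≤ μ₁) (hμ₂ : 1 ≤ μ₂) :
    ∃ C > (0 : ℝ), ∃ N₀ : ℕ, ∀ N : ℕ, N₀ ≤ N → ∀ ℓ : ℕ →₀ ℤ, wnorm η ℓ < N →
      (∏ i ∈ ℓ.support, (1 + ((i : ℝ) + 1) ^ μ₁ * |(ℓ i : ℝ)| ^ μ₂)) ≤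
        (1 + (N : ℝ)) ^ (C * (N : ℝ) ^ (1 / (1 + η))) := by
  set A : ℝ := μ₁ / η + μ₂ + 1 with hA
  have hApos : 0 < A := by positivity
  refine ⟨2 * A, by positivity, 1, ?_⟩
  intro N hN ℓ hℓ
  have hN1 : (1 : ℝ) ≤ (N : ℝ) := by exact_mod_cast hN
  have hNb : (2 : ℝ) ≤ 1 + (N : ℝ) := by linarith
  have hNb1 : (1 : ℝ) ≤ 1 + (N : ℝ) := by linarith
  have hNb0 : (0 : ℝ) ≤ 1 + (N : ℝ) := by linarith
  set k := ℓ.support.card with hk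
  -- each summand of wnorm is nonneg
  have hterm_nonneg : ∀ i ∈ ℓ.support, (0 : ℝ) ≤ ((i : ℝ) + 1) ^ η * |(ℓ i : ℝ)| := by
    intro i _; positivity
  have habs1 : ∀ i ∈ ℓ.support, (1 : ℝ) ≤ |(ℓ i : ℝ)| := by
    intro i hi
    have : ℓ i ≠ 0 := Finsupp.mem_support_iff.mp hi
    have : (1 : ℤ) ≤ |ℓ i| := Int.one_le_abs (by omega)
    calc (1 : ℝ) ≤ ((|ℓ i| : ℤ) : ℝ) := by exact_mod_cast this
    _ = |(ℓ i : ℝ)| := by rw [Int.cast_abs]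
  -- single term bound
  have hsingle : ∀ i ∈ ℓ.support, ((i : ℝ) + 1) ^ η * |(ℓ i : ℝ)| ≤ (N : ℝ) := by
    intro i hi
    exact le_of_lt (lt_of_le_of_lt (Finset.single_le_sum hterm_nonneg hi) hℓ)
  -- cardinality bound : k ≤ 2 * N ^ (1/(1+η))
  have hcard : (k : ℝ) ≤ 2 * (N : ℝ) ^ (1 / (1 + η)) := by
    -- ∑_{j < k} (j+1)^η ≤ wnorm
    have h1 : ∑ j ∈ Finset.range k, ((j : ℝ) + 1) ^ η ≤ wnorm η ℓ := by
      have hmono : Monotone fun j : ℕ => ((j : ℝ) + 1) ^ η := by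
        intro a b hab
        have hab' : ((a : ℝ) + 1) ≤ (b : ℝ) + 1 := by exact_mod_cast Nat.succ_le_succ hab
        exact Real.rpow_le_rpow (by positivity) hab' hη.le
      refine le_trans (sum_range_card_le hmono) ?_
      apply Finset.sum_le_sum
      intro i hi
      nth_rewrite 1 [← mul_one (((i : ℝ) + 1) ^ η)]
      exact mul_le_mul_of_nonneg_left (habs1 i hi) (by positivity)
    -- lower bound for the range sum : ((k:ℝ)/2)^(1+η)
    have h2 : ((k : ℝ) / 2) ^ (1 + η) ≤ ∑ j ∈ Finset.range k, ((j : ℝ) + 1) ^ η := by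
      have hsub : Finset.Ico (k / 2) k ⊆ Finset.range k := by
        intro x hx; simp only [Finset.mem_Ico] at hx; exact Finset.mem_range.mpr hx.2
      have hstep : ((k : ℝ) / 2) * ((k : ℝ) / 2) ^ η ≤ ∑ j ∈ Finset.Ico (k / 2) k, ((j : ℝ) + 1) ^ η := by
        have hcardIco : (Finset.Ico (k / 2) k).card = k - k / 2 := by
          rw [Nat.card_Ico]
        have hge : ∀ j ∈ Finset.Ico (k / 2) k, ((k : ℝ) / 2) ^ η ≤ ((j : ℝ) + 1) ^ η := by
          intro j hj
          simp only [Finset.mem_Ico] at hj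
          apply Real.rpow_le_rpow (by positivity) ?_ hη.le
          have : (k : ℝ) / 2 ≤ (k / 2 : ℕ) + 1 := by
            have h2k : k ≤ 2 * (k / 2) + 1 := by omega
            have : (k : ℝ) ≤ 2 * ((k / 2 : ℕ) : ℝ) + 1 := by exact_mod_cast h2k
            linarith
          have hjj : ((k / 2 : ℕ) : ℝ) ≤ (j : ℝ) := by exact_mod_cast hj.1
          linarith
        calc ((k : ℝ) / 2) * ((k : ℝ) / 2) ^ η
            ≤ ((k - k / 2 : ℕ) : ℝ) * ((k : ℝ) / 2) ^ η := by
              apply mul_le_mul_of_nonneg_right ?_ (by positivity)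
              have : k ≤ 2 * (k - k / 2) := by omega
              have : (k : ℝ) ≤ 2 * ((k - k / 2 : ℕ) : ℝ) := by exact_mod_cast this
              linarith
          _ = ∑ _j ∈ Finset.Ico (k / 2) k, ((k : ℝ) / 2) ^ η := by
              rw [Finset.sum_const, hcardIco, nsmul_eq_mul]
          _ ≤ ∑ j ∈ Finset.Ico (k / 2) k, ((j : ℝ) + 1) ^ η := Finset.sum_le_sum hge
      calc ((k : ℝ) / 2) ^ (1 + η) = ((k : ℝ) / 2) * ((k : ℝ) / 2) ^ η := by
            rw [Real.rpow_add' (by positivity) (by positivity : (1 : ℝ) + η ≠ 0),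
              Real.rpow_one]
        _ ≤ ∑ j ∈ Finset.Ico (k / 2) k, ((j : ℝ) + 1) ^ η := hstep
        _ ≤ ∑ j ∈ Finset.range k, ((j : ℝ) + 1) ^ η :=
            Finset.sum_le_sum_of_subset_of_nonneg hsub (fun j _ _ => by positivity)
    have h3 : ((k : ℝ) / 2) ^ (1 + η) ≤ (N : ℝ) := le_of_lt (lt_of_le_of_lt (le_trans h2 h1) hℓ)
    have h1η : (0 : ℝ) < 1 + η := by linarith
    have h4 : (k : ℝ) / 2 ≤ (N : ℝ) ^ (1 / (1 + η)) := by
      have := Real.rpow_le_rpow (by positivity) h3 (le_of_lt (by positivity : (0:ℝ) < 1 / (1 + η)))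
      rwa [← Real.rpow_mul (by positivity : (0:ℝ) ≤ (k : ℝ) / 2), mul_one_div,
        div_self h1η.ne', Real.rpow_one] at this
    linarith
  -- per-factor bound
  have hfac : ∀ i ∈ ℓ.support, 1 + ((i : ℝ) + 1) ^ μ₁ * |(ℓ i : ℝ)| ^ μ₂ ≤ (1 + (N : ℝ)) ^ A := by
    intro i hi
    have hs := hsingle i hi
    have ha := habs1 i hi
    have hbase : ((i : ℝ) + 1) ^ η ≤ 1 + (N : ℝ) := by
      calc ((i : ℝ) + 1) ^ η = ((i : ℝ) + 1) ^ η * 1 := by ring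
        _ ≤ ((i : ℝ) + 1) ^ η * |(ℓ i : ℝ)| := by
            exact mul_le_mul_of_nonneg_left ha (by positivity)
        _ ≤ (N : ℝ) := hs
        _ ≤ 1 + (N : ℝ) := by linarith
    have hi1 : ((i : ℝ) + 1) ≤ (1 + (N : ℝ)) ^ (1 / η) := by
      have := Real.rpow_le_rpow (by positivity) hbase (le_of_lt (by positivity : (0:ℝ) < 1 / η))
      rwa [← Real.rpow_mul (by positivity), mul_one_div, div_self hη.ne', Real.rpow_one] at this
    have hi2 : ((i : ℝ) + 1) ^ μ₁ ≤ (1 + (N : ℝ)) ^ (μ₁ / η) := by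
      have := Real.rpow_le_rpow (by positivity) hi1 (by linarith : (0:ℝ) ≤ μ₁)
      rwa [← Real.rpow_mul hNb0, one_div, inv_mul_eq_div] at this
    have hl1 : |(ℓ i : ℝ)| ≤ 1 + (N : ℝ) := by
      have hge1 : (1 : ℝ) ≤ ((i : ℝ) + 1) ^ η :=
        Real.one_le_rpow (by exact_mod_cast by linarith [Nat.cast_nonneg (α := ℝ) i] :
          (1:ℝ) ≤ (i : ℝ) + 1) hη.le
      nlinarith [abs_nonneg ((ℓ i : ℝ))]
    have hl2 : |(ℓ i : ℝ)| ^ μ₂ ≤ (1 + (N : ℝ)) ^ μ₂ :=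
      Real.rpow_le_rpow (abs_nonneg _) hl1 (by linarith)
    have hmul : ((i : ℝ) + 1) ^ μ₁ * |(ℓ i : ℝ)| ^ μ₂ ≤ (1 + (N : ℝ)) ^ (μ₁ / η + μ₂) := by
      rw [Real.rpow_add (by positivity)]
      exact mul_le_mul hi2 hl2 (by positivity) (by positivity)
    have hone : (1 : ℝ) ≤ (1 + (N : ℝ)) ^ (μ₁ / η + μ₂) :=
      Real.one_le_rpow hNb1 (by positivity)
    calc 1 + ((i : ℝ) + 1) ^ μ₁ * |(ℓ i : ℝ)| ^ μ₂
        ≤ 2 * (1 + (N : ℝ)) ^ (μ₁ / η + μ₂) := by linarith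
      _ ≤ (1 + (N : ℝ)) * (1 + (N : ℝ)) ^ (μ₁ / η + μ₂) := by
          exact mul_le_mul_of_nonneg_right hNb (by positivity)
      _ = (1 + (N : ℝ)) ^ A := by
          rw [hA, Real.rpow_add (by positivity : (0:ℝ) < 1 + (N:ℝ)) (μ₁ / η + μ₂) 1,
            Real.rpow_one]
          ring
  -- assemble
  have hprod : (∏ i ∈ ℓ.support, (1 + ((i : ℝ) + 1) ^ μ₁ * |(ℓ i : ℝ)| ^ μ₂)) ≤
      (1 + (N : ℝ)) ^ (A * k) := by
    calc (∏ i ∈ ℓ.support, (1 + ((i : ℝ) + 1) ^ μ₁ * |(ℓ i : ℝ)| ^ μ₂))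
        ≤ ∏ _i ∈ ℓ.support, (1 + (N : ℝ)) ^ A := by
          apply Finset.prod_le_prod (fun i _ => by positivity) hfac
      _ = ((1 + (N : ℝ)) ^ A) ^ (k : ℕ) := by rw [Finset.prod_const]
      _ = (1 + (N : ℝ)) ^ (A * k) := by
          rw [← Real.rpow_natCast ((1 + (N : ℝ)) ^ A) k, ← Real.rpow_mul hNb0]
  refine le_trans hprod ?_
  apply Real.rpow_le_rpow_of_exponent_le hNb1
  have : A * (k : ℝ) ≤ A * (2 * (N : ℝ) ^ (1 / (1 + η))) :=
    mul_le_mul_of_nonneg_left hcard hApos.le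
  linarith
end
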